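/- Assume H = inf_x min_{i<j} |p_{i,j}(x) - 1/2| > 0 and each P_x is strictly stochastically transitive with unique Kemeny median σ*_{P_x}. For a ranking rule s, let Z(s) = Σ_{i<j} [1{(Σ(i)-Σ(j))(s(X)(i)-s(X)(j)) < 0} - 1{(Σ(i)-Σ(j))(σ*_{P_X}(i)-σ*_{P_X}(j)) < 0}]. Then Var(Z(s)) ≤ (n(n-1)/(2H)) · (R(s) - R*). -/

import Mathlib

open Finset

/-- The set of ordered pairs (i,j) with i < j. -/
def pairs (n : ℕ) : Finset (Fin n × Fin n) :=
  Finset.univ.filter fun p => p.1 < p.2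

/-- Kendall tau distance between two permutations. -/
noncomputable def dtau {n : ℕ} (σ σ' : Equiv.Perm (Fin n)) : ℝ :=
  ∑ p ∈ pairs n,
    if (((σ p.1 : ℕ) : ℤ) - ((σ p.2 : ℕ) : ℤ)) * (((σ' p.1 : ℕ) : ℤ) - ((σ' p.2 : ℕ) : ℤ)) < 0
    then 1 else 0

/-- Expected Kendall tau distance L_P(σ) = E_{Σ∼P}[d_τ(Σ,σ)]. -/
noncomputable def L {n : ℕ} (P : Equiv.Perm (Fin n) → ℝ) (σ : Equiv.Perm (Fin n)) : ℝ :=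
  ∑ τ : Equiv.Perm (Fin n), P τ * dtau τ σ

/-- Pairwise probability p_{i,j} = P{Σ(i) < Σ(j)}. -/
noncomputable def pp {n : ℕ} (P : Equiv.Perm (Fin n) → ℝ) (i j : Fin n) : ℝ :=
  ∑ τ : Equiv.Perm (Fin n), P τ * (if τ i < τ j then 1 else 0)

/-- P is a probability distribution on S_n. -/
def IsProb {n : ℕ} (P : Equiv.Perm (Fin n) → ℝ) : Prop :=
  (∀ τ, 0 ≤ P τ) ∧ ∑ τ : Equiv.Perm (Fin n), P τ = 1

/-- σ is a Kemeny median of P. -/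
def IsMedian {n : ℕ} (P : Equiv.Perm (Fin n) → ℝ) (σ : Equiv.Perm (Fin n)) : Prop :=
  ∀ τ, L P σ ≤ L P τ

/-- L*_P = min_σ L_P(σ). -/
noncomputable def Lstar {n : ℕ} (P : Equiv.Perm (Fin n) → ℝ) : ℝ :=
  ⨅ σ : Equiv.Perm (Fin n), L P σ

/-- Stochastic transitivity. -/
def StochTrans {n : ℕ} (P : Equiv.Perm (Fin n) → ℝ) : Prop :=
  ∀ i j k : Fin n, 1/2 ≤ pp P i j → 1/2 ≤ pp P j k → 1/2 ≤ pp P i k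

/-- Strict stochastic transitivity. -/
def StrictStochTrans {n : ℕ} (P : Equiv.Perm (Fin n) → ℝ) : Prop :=
  StochTrans P ∧ ∀ i j : Fin n, i < j → pp P i j ≠ 1/2

open MeasureTheory

instance {n : ℕ} : MeasurableSpace (Equiv.Perm (Fin n)) := ⊤

/-- Risk of a ranking rule s: R(s) = E_{X∼μ}[L_{P_X}(s(X))]. -/
noncomputable def Risk {n : ℕ} {X : Type*} [MeasurableSpace X] (μ : Measure X)
    (P : X → Equiv.Perm (Fin n) → ℝ) (s : X → Equiv.Perm (Fin n)) : ℝ :=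
  ∫ x, L (P x) (s x) ∂μ

/-- Minimum risk over all measurable ranking rules. -/
noncomputable def RiskStar {n : ℕ} {X : Type*} [MeasurableSpace X] (μ : Measure X)
    (P : X → Equiv.Perm (Fin n) → ℝ) : ℝ :=
  sInf {r | ∃ s : X → Equiv.Perm (Fin n), Measurable s ∧ r = Risk μ P s}

/-- Expectation under the joint law of (X, Σ). -/
noncomputable def jointE {n : ℕ} {X : Type*} [MeasurableSpace X] (μ : Measure X)
    (P : X → Equiv.Perm (Fin n) → ℝ) (f : X → Equiv.Perm (Fin n) → ℝ) : ℝ :=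
  ∫ x, ∑ τ : Equiv.Perm (Fin n), P x τ * f x τ ∂μ

/-- The random variable Z(s) of the fast-rate lemma. -/
noncomputable def Zfun {n : ℕ} {X : Type*} (s sstar : X → Equiv.Perm (Fin n))
    (x : X) (τ : Equiv.Perm (Fin n)) : ℝ :=
  ∑ p ∈ pairs n,
    ((if (((τ p.1 : ℕ) : ℤ) - ((τ p.2 : ℕ) : ℤ)) *
          (((s x p.1 : ℕ) : ℤ) - ((s x p.2 : ℕ) : ℤ)) < 0 then (1:ℝ) else 0) -
     (if (((τ p.1 : ℕ) : ℤ) - ((τ p.2 : ℕ) : ℤ)) *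
          (((sstar x p.1 : ℕ) : ℤ) - ((sstar x p.2 : ℕ) : ℤ)) < 0 then (1:ℝ) else 0))

section Helpers

variable {n : ℕ}

lemma int_sign_iff (a b c d : ℤ) (hab : a ≠ b) (hcd : c ≠ d) :
    (a - b) * (c - d) < 0 ↔ (a < b ↔ d < c) := by
  rw [mul_neg_iff]; omega

lemma perm_val_ne (σ : Equiv.Perm (Fin n)) {i j : Fin n} (h : i ≠ j) :
    ((σ i : ℕ) : ℤ) ≠ ((σ j : ℕ) : ℤ) := by
  intro hc
  exact h (σ.injective (Fin.val_injective (by exact_mod_cast hc)))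

lemma perm_nat_ne (σ : Equiv.Perm (Fin n)) {i j : Fin n} (h : i ≠ j) :
    (σ i : ℕ) ≠ (σ j : ℕ) := by
  intro hc
  exact h (σ.injective (Fin.val_injective hc))

lemma perm_not_lt (τ : Equiv.Perm (Fin n)) {i j : Fin n} (hij : i ≠ j) :
    (¬ τ i < τ j) ↔ τ j < τ i := by
  have := perm_nat_ne τ hij
  simp only [Fin.lt_iff_val_lt_val]
  omega

lemma ind_rw (τ σ : Equiv.Perm (Fin n)) {i j : Fin n} (hij : i ≠ j) :
    (if (((τ i : ℕ) : ℤ) - ((τ j : ℕ) : ℤ)) * (((σ i : ℕ) : ℤ) - ((σ j : ℕ) : ℤ)) < 0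
      then (1:ℝ) else 0)
    = if (τ i < τ j) ↔ (σ j < σ i) then 1 else 0 := by
  apply if_congr _ rfl rfl
  rw [int_sign_iff _ _ _ _ (perm_val_ne τ hij) (perm_val_ne σ hij)]
  have h1 := perm_nat_ne τ hij
  have h2 := perm_nat_ne σ hij
  simp only [Fin.lt_iff_val_lt_val]
  omega

lemma pp_compl {P : Equiv.Perm (Fin n) → ℝ} (hP : IsProb P) {i j : Fin n} (h : i ≠ j) :
    pp P i j + pp P j i = 1 := by
  unfold pp
  rw [← Finset.sum_add_distrib]
  have : ∀ τ : Equiv.Perm (Fin n), τ ∈ Finset.univ →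
      (P τ * (if τ i < τ j then (1:ℝ) else 0) + P τ * (if τ j < τ i then (1:ℝ) else 0))
      = P τ := by
    intro τ _
    have ht : τ i ≠ τ j := fun hc => h (τ.injective hc)
    rcases ht.lt_or_gt with h' | h'
    · rw [if_pos h', if_neg (asymm h')]; ring
    · rw [if_neg (asymm h'), if_pos h']; ring
  rw [Finset.sum_congr rfl this, hP.2]

lemma L_eq {P : Equiv.Perm (Fin n) → ℝ} (hP : IsProb P) (σ : Equiv.Perm (Fin n)) :
    L P σ = ∑ p ∈ pairs n,
      (if σ p.1 < σ p.2 then 1 - pp P p.1 p.2 else pp P p.1 p.2) := by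
  unfold L dtau
  simp_rw [Finset.mul_sum]
  rw [Finset.sum_comm]
  refine Finset.sum_congr rfl fun p hp => ?_
  have hlt : p.1 < p.2 := by simpa [pairs] using hp
  have hij : p.1 ≠ p.2 := ne_of_lt hlt
  by_cases h : σ p.1 < σ p.2
  · rw [if_pos h, show (1:ℝ) - pp P p.1 p.2 = pp P p.2 p.1 by
      linarith [pp_compl hP hij]]
    unfold pp
    refine Finset.sum_congr rfl fun τ _ => ?_
    rw [ind_rw τ σ hij]
    refine congrArg _ (if_congr ?_ rfl rfl)
    rw [iff_false_intro (asymm h), iff_false]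
    exact perm_not_lt τ hij
  · rw [if_neg h]
    have h' : σ p.2 < σ p.1 := (perm_not_lt σ hij).mp h
    unfold pp
    refine Finset.sum_congr rfl fun τ _ => ?_
    rw [ind_rw τ σ hij]
    refine congrArg _ (if_congr ?_ rfl rfl)
    rw [iff_true_intro h', iff_true]

end Helpers
section Median

variable {n : ℕ}

/-- Swapping an adjacent inversion strictly decreases L. -/
lemma L_swap_lt {P : Equiv.Perm (Fin n) → ℝ} (hP : IsProb P)
    (σ : Equiv.Perm (Fin n)) {i j : Fin n} (hij : i ≠ j)
    (hadj : (σ j : ℕ) + 1 = (σ i : ℕ)) (hp : 1/2 < pp P i j) :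
    L P (Equiv.swap (σ i) (σ j) * σ) < L P σ := by
  set σ' := Equiv.swap (σ i) (σ j) * σ with hσ'
  have e1 : σ' i = σ j := by simp [hσ', Equiv.swap_apply_left]
  have e2 : σ' j = σ i := by simp [hσ', Equiv.swap_apply_right]
  have e3 : ∀ k, k ≠ i → k ≠ j → σ' k = σ k := by
    intro k hki hkj
    simp only [hσ', Equiv.Perm.mul_apply]
    exact Equiv.swap_apply_of_ne_of_ne
      (fun hc => hki (σ.injective hc)) (fun hc => hkj (σ.injective hc))
  have hji : σ j < σ i := by
    simp only [Fin.lt_iff_val_lt_val]; omega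
  have hcompl := pp_compl hP hij
  set q : Fin n × Fin n := if i < j then (i, j) else (j, i) with hq
  have hqmem : q ∈ pairs n := by
    rcases lt_or_gt_of_ne hij with h | h
    · simp [hq, h, pairs]
    · simp [hq, not_lt_of_gt h, pairs, h]
  have hqlt : (if σ' q.1 < σ' q.2 then 1 - pp P q.1 q.2 else pp P q.1 q.2)
      < (if σ q.1 < σ q.2 then 1 - pp P q.1 q.2 else pp P q.1 q.2) := by
    rcases lt_or_gt_of_ne hij with h | h
    · simp only [hq, if_pos h]
      rw [if_pos (show σ' i < σ' j by rw [e1, e2]; exact hji),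
        if_neg (asymm hji)]
      linarith
    · simp only [hq, if_neg (not_lt_of_gt h)]
      rw [if_neg (show ¬ σ' j < σ' i by rw [e1, e2]; exact asymm hji),
        if_pos hji]
      linarith
  rw [L_eq hP, L_eq hP]
  apply Finset.sum_lt_sum
  · intro p hpmem
    rcases eq_or_ne p q with rfl | hpq
    · exact le_of_lt hqlt
    · obtain ⟨a, b⟩ := p
      have hlt : a < b := by simpa [pairs] using hpmem
      have h12 : a ≠ b := ne_of_lt hlt
      have hne1 : ¬ (a = i ∧ b = j) := by
        rintro ⟨rfl, rfl⟩; exact hpq (by simp [hq, hlt])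
      have hne2 : ¬ (a = j ∧ b = i) := by
        rintro ⟨rfl, rfl⟩; exact hpq (by simp [hq, not_lt_of_gt hlt])
      have hiff : (σ' a < σ' b) ↔ (σ a < σ b) := by
        rcases eq_or_ne a i with h | ha1
        · rcases eq_or_ne b j with h' | hb2
          · exact absurd ⟨h, h'⟩ hne1
          · rcases eq_or_ne b i with h' | hb1
            · exact absurd (h.trans h'.symm) h12
            · rw [h, e1, e3 _ hb1 hb2]
              have n1 := perm_nat_ne σ (Ne.symm hb1)
              have n2 := perm_nat_ne σ (Ne.symm hb2)
              simp only [Fin.lt_iff_val_lt_val]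
              omega
        · rcases eq_or_ne a j with h | ha2
          · rcases eq_or_ne b i with h' | hb1
            · exact absurd ⟨h, h'⟩ hne2
            · rcases eq_or_ne b j with h' | hb2
              · exact absurd (h.trans h'.symm) h12
              · rw [h, e2, e3 _ hb1 hb2]
                have n1 := perm_nat_ne σ (Ne.symm hb1)
                have n2 := perm_nat_ne σ (Ne.symm hb2)
                simp only [Fin.lt_iff_val_lt_val]
                omega
          · rcases eq_or_ne b i with h' | hb1
            · rw [h', e3 _ ha1 ha2, e1]
              have n1 := perm_nat_ne σ ha1
              have n2 := perm_nat_ne σ ha2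
              simp only [Fin.lt_iff_val_lt_val]
              omega
            · rcases eq_or_ne b j with h' | hb2
              · rw [h', e3 _ ha1 ha2, e2]
                have n1 := perm_nat_ne σ ha1
                have n2 := perm_nat_ne σ ha2
                simp only [Fin.lt_iff_val_lt_val]
                omega
              · rw [e3 _ ha1 ha2, e3 _ hb1 hb2]
      rw [if_congr hiff rfl rfl]
  · exact ⟨q, hqmem, hqlt⟩

end Median
section MedianChar

variable {n : ℕ}

lemma pp_ne_half {P : Equiv.Perm (Fin n) → ℝ} (hP : IsProb P)
    (hT : StrictStochTrans P) {i j : Fin n} (hij : i ≠ j) : pp P i j ≠ 1/2 := by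
  rcases lt_or_gt_of_ne hij with h | h
  · exact hT.2 i j h
  · have := hT.2 j i h
    have hc := pp_compl hP hij
    intro hc'
    apply this
    linarith

/-- A Kemeny median ranks i before j whenever p_{ij} > 1/2. -/
lemma median_agrees {P : Equiv.Perm (Fin n) → ℝ} (hP : IsProb P)
    (hT : StrictStochTrans P) {σ : Equiv.Perm (Fin n)} (hσ : IsMedian P σ)
    {i j : Fin n} (hij : i ≠ j) (hp : 1/2 < pp P i j) : σ i < σ j := by
  by_contra hcon
  have hji : σ j < σ i := (perm_not_lt σ hij).mp hcon
  -- strong induction on the gap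
  have main : ∀ g : ℕ, ∀ i j : Fin n, 1/2 < pp P i j → σ j < σ i →
      (σ i : ℕ) - (σ j : ℕ) = g → False := by
    intro g
    induction g using Nat.strong_induction_on with
    | _ g IH =>
      intro i j hp hji hg
      have hij : i ≠ j := by
        intro hc; subst hc; exact lt_irrefl _ hji
      have hval : (σ j : ℕ) < (σ i : ℕ) := hji
      rcases eq_or_lt_of_le (Nat.succ_le_of_lt hval) with hadj | hgap
      · -- adjacent: swap contradicts medianity
        exact absurd (hσ _) (not_le_of_gt (L_swap_lt hP σ hij hadj hp))
      · -- non-adjacent: find intermediate element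
        have hpos : (σ j : ℕ) + 1 < n := lt_trans hgap (σ i).isLt
        set k := σ.symm ⟨(σ j : ℕ) + 1, hpos⟩ with hk
        have hσk : (σ k : ℕ) = (σ j : ℕ) + 1 := by
          simp [hk]
        have hki : k ≠ i := by
          intro hc; rw [hc] at hσk; omega
        have hkj : k ≠ j := by
          intro hc; rw [hc] at hσk; omega
        by_cases hkb : 1/2 < pp P k j
        · exact IH ((σ k : ℕ) - (σ j : ℕ)) (by omega) k j hkb
            (by simp only [Fin.lt_iff_val_lt_val]; omega) rfl
        · have h1 : 1/2 ≤ pp P j k := by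
            have := pp_compl hP (Ne.symm hkj)
            push_neg at hkb
            linarith
          have h2 : 1/2 ≤ pp P i k := hT.1 i j k (le_of_lt hp) h1
          have h3 : 1/2 < pp P i k :=
            lt_of_le_of_ne h2 (Ne.symm (pp_ne_half hP hT (Ne.symm hki)))
          exact IH ((σ i : ℕ) - (σ k : ℕ)) (by omega) i k h3
            (by simp only [Fin.lt_iff_val_lt_val]; omega) rfl
  exact main _ i j hp hji rfl

/-- Full alignment: for i < j, σ* puts i before j iff p_{ij} > 1/2. -/
lemma median_iff {P : Equiv.Perm (Fin n) → ℝ} (hP : IsProb P)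
    (hT : StrictStochTrans P) {σ : Equiv.Perm (Fin n)} (hσ : IsMedian P σ)
    {i j : Fin n} (hij : i ≠ j) : (σ i < σ j) ↔ 1/2 < pp P i j := by
  constructor
  · intro h
    rcases lt_or_gt_of_ne (pp_ne_half hP hT hij) with h' | h'
    · have : 1/2 < pp P j i := by
        have := pp_compl hP hij; linarith
      exact absurd (median_agrees hP hT hσ (Ne.symm hij) this) (asymm h)
    · exact h'
  · exact median_agrees hP hT hσ hij

end MedianChar
section Pointwise

variable {n : ℕ}

/-- Pairs on which two rankings disagree. -/
def disag (σ σ' : Equiv.Perm (Fin n)) : Finset (Fin n × Fin n) :=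
  (pairs n).filter fun p => ¬ ((σ p.1 < σ p.2) ↔ (σ' p.1 < σ' p.2))

lemma term_eq_zero {τ σ σ' : Equiv.Perm (Fin n)} {p : Fin n × Fin n}
    (hp : p ∈ pairs n) (h : (σ p.1 < σ p.2) ↔ (σ' p.1 < σ' p.2)) :
    ((if (((τ p.1 : ℕ) : ℤ) - ((τ p.2 : ℕ) : ℤ)) *
          (((σ p.1 : ℕ) : ℤ) - ((σ p.2 : ℕ) : ℤ)) < 0 then (1:ℝ) else 0) -
     (if (((τ p.1 : ℕ) : ℤ) - ((τ p.2 : ℕ) : ℤ)) *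
          (((σ' p.1 : ℕ) : ℤ) - ((σ' p.2 : ℕ) : ℤ)) < 0 then (1:ℝ) else 0)) = 0 := by
  have hij : p.1 ≠ p.2 := ne_of_lt (by simpa [pairs] using hp)
  rw [ind_rw τ σ hij, ind_rw τ σ' hij]
  have h2 : (σ p.2 < σ p.1) ↔ (σ' p.2 < σ' p.1) := by
    rw [← perm_not_lt σ hij, ← perm_not_lt σ' hij]
    exact not_congr h
  rw [if_congr (iff_congr Iff.rfl h2) rfl rfl, sub_self]

lemma Zfun_abs_le {X : Type*} (s sstar : X → Equiv.Perm (Fin n)) (x : X)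
    (τ : Equiv.Perm (Fin n)) :
    |Zfun s sstar x τ| ≤ ((disag (s x) (sstar x)).card : ℝ) := by
  unfold Zfun
  rw [← Finset.sum_subset (Finset.filter_subset _ (pairs n))
    (fun p hp hnp => term_eq_zero hp (by
      by_contra hcon
      exact hnp (Finset.mem_filter.mpr ⟨hp, hcon⟩)))]
  calc |∑ p ∈ disag (s x) (sstar x), _| ≤ ∑ p ∈ disag (s x) (sstar x), (1:ℝ) := by
        apply Finset.abs_sum_le_sum_abs _ _ |>.trans
        apply Finset.sum_le_sum
        intro p _
        have : ∀ a b : ℝ, a = 0 ∨ a = 1 → b = 0 ∨ b = 1 → |a - b| ≤ 1 := by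
          rintro a b (rfl|rfl) (rfl|rfl) <;> norm_num
        apply this <;> split <;> simp
    _ = _ := by simp
lemma L_diff_ge {P : Equiv.Perm (Fin n) → ℝ} (hP : IsProb P)
    (hT : StrictStochTrans P) {σstar : Equiv.Perm (Fin n)} (hσ : IsMedian P σstar)
    (σ : Equiv.Perm (Fin n)) {H : ℝ}
    (hH : ∀ i j : Fin n, i < j → H ≤ |pp P i j - 1/2|) :
    2 * H * ((disag σ σstar).card : ℝ) ≤ L P σ - L P σstar := by
  rw [L_eq hP σ, L_eq hP σstar, ← Finset.sum_sub_distrib]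
  have : 2 * H * ((disag σ σstar).card : ℝ)
      = ∑ p ∈ pairs n, (if ¬ ((σ p.1 < σ p.2) ↔ (σstar p.1 < σstar p.2))
          then 2 * H else 0) := by
    rw [← Finset.sum_filter]
    simp [disag, mul_comm]
  rw [this]
  apply Finset.sum_le_sum
  intro p hp
  have hplt : p.1 < p.2 := by simpa [pairs] using hp
  have hij : p.1 ≠ p.2 := ne_of_lt hplt
  by_cases hagree : (σ p.1 < σ p.2) ↔ (σstar p.1 < σstar p.2)
  · rw [if_neg (not_not_intro hagree), if_congr hagree rfl rfl, sub_self]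
  · rw [if_pos hagree]
    have hHp := hH p.1 p.2 hplt
    by_cases hst : σstar p.1 < σstar p.2
    · have hpgt : 1/2 < pp P p.1 p.2 := (median_iff hP hT hσ hij).mp hst
      have hs : ¬ σ p.1 < σ p.2 := fun hc => hagree (iff_of_true hc hst)
      rw [if_neg hs, if_pos hst]
      rcases abs_cases (pp P p.1 p.2 - 1/2) with ⟨he, _⟩ | ⟨he, _⟩ <;> linarith
    · have hple : ¬ 1/2 < pp P p.1 p.2 := fun hc =>
        hst ((median_iff hP hT hσ hij).mpr hc)
      have hs : σ p.1 < σ p.2 := by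
        by_contra hc; exact hagree (iff_of_false hc hst)
      rw [if_pos hs, if_neg hst]
      push_neg at hple
      rcases abs_cases (pp P p.1 p.2 - 1/2) with ⟨he, _⟩ | ⟨he, _⟩ <;> linarith

lemma sum_sq_le {X : Type*} {P : Equiv.Perm (Fin n) → ℝ} (hP : IsProb P)
    (hT : StrictStochTrans P) (s sstar : X → Equiv.Perm (Fin n)) (x : X)
    (hσ : IsMedian P (sstar x)) {H : ℝ} (hHpos : 0 < H)
    (hH : ∀ i j : Fin n, i < j → H ≤ |pp P i j - 1/2|) :
    ∑ τ : Equiv.Perm (Fin n), P τ * (Zfun s sstar x τ)^2 ≤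
      (((pairs n).card : ℝ) / (2 * H)) * (L P (s x) - L P (sstar x)) := by
  set m : ℝ := ((disag (s x) (sstar x)).card : ℝ) with hm
  set N : ℝ := (((pairs n)).card : ℝ) with hN
  have hmN : m ≤ N := by
    rw [hm, hN]
    exact_mod_cast Finset.card_filter_le (pairs n)
      (fun p => ¬ ((s x p.1 < s x p.2) ↔ (sstar x p.1 < sstar x p.2)))
  have hm0 : 0 ≤ m := Nat.cast_nonneg _
  have step1 : ∑ τ : Equiv.Perm (Fin n), P τ * (Zfun s sstar x τ)^2 ≤ N * m := by
    calc ∑ τ : Equiv.Perm (Fin n), P τ * (Zfun s sstar x τ)^2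
        ≤ ∑ τ : Equiv.Perm (Fin n), P τ * (N * m) := by
          apply Finset.sum_le_sum
          intro τ _
          apply mul_le_mul_of_nonneg_left _ (hP.1 τ)
          have h1 : |Zfun s sstar x τ| ≤ m := Zfun_abs_le s sstar x τ
          calc (Zfun s sstar x τ)^2 = |Zfun s sstar x τ|^2 := (sq_abs _).symm
            _ ≤ m^2 := by nlinarith [abs_nonneg (Zfun s sstar x τ)]
            _ ≤ N * m := by nlinarith
      _ = N * m := by rw [← Finset.sum_mul, hP.2, one_mul]
  have step2 : 2 * H * m ≤ L P (s x) - L P (sstar x) :=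
    L_diff_ge hP hT hσ (s x) hH
  calc ∑ τ : Equiv.Perm (Fin n), P τ * (Zfun s sstar x τ)^2
      ≤ N * m := step1
    _ = (N / (2 * H)) * (2 * H * m) := by field_simp
    _ ≤ (N / (2 * H)) * (L P (s x) - L P (sstar x)) := by
        apply mul_le_mul_of_nonneg_left step2
        positivity
lemma meas_comp {X : Type*} [MeasurableSpace X] {f : X → Equiv.Perm (Fin n)}
    (hf : Measurable f) (F : Equiv.Perm (Fin n) → ℝ) :
    Measurable fun x => F (f x) :=
  (measurable_from_top (f := F)).comp hf

lemma dtau_nonneg (τ σ : Equiv.Perm (Fin n)) : 0 ≤ dtau τ σ := by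
  unfold dtau
  apply Finset.sum_nonneg
  intro p _
  split <;> norm_num

lemma dtau_le (τ σ : Equiv.Perm (Fin n)) : dtau τ σ ≤ ((pairs n).card : ℝ) := by
  unfold dtau
  refine le_trans (Finset.sum_le_sum (g := fun _ => (1:ℝ)) fun p _ => ?_) (by simp)
  split <;> norm_num

lemma L_nonneg {P : Equiv.Perm (Fin n) → ℝ} (hP : IsProb P)
    (σ : Equiv.Perm (Fin n)) : 0 ≤ L P σ := by
  apply Finset.sum_nonneg
  intro τ _
  exact mul_nonneg (hP.1 τ) (dtau_nonneg τ σ)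

lemma L_le {P : Equiv.Perm (Fin n) → ℝ} (hP : IsProb P)
    (σ : Equiv.Perm (Fin n)) : L P σ ≤ ((pairs n).card : ℝ) := by
  unfold L
  calc ∑ τ : Equiv.Perm (Fin n), P τ * dtau τ σ
      ≤ ∑ τ : Equiv.Perm (Fin n), P τ * ((pairs n).card : ℝ) := by
        apply Finset.sum_le_sum
        intro τ _
        exact mul_le_mul_of_nonneg_left (dtau_le τ σ) (hP.1 τ)
    _ = _ := by rw [← Finset.sum_mul, hP.2, one_mul]

end Pointwise
theorem stmt_15 {n : ℕ} {X : Type*} [MeasurableSpace X]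
    (μ : Measure X) [IsProbabilityMeasure μ]
    (P : X → Equiv.Perm (Fin n) → ℝ)
    (hP : ∀ x, IsProb (P x)) (hmeas : ∀ τ, Measurable fun x => P x τ)
    (H : ℝ) (hHpos : 0 < H)
    (hH : ∀ x, ∀ i j : Fin n, i < j → H ≤ |pp (P x) i j - 1/2|)
    (hTx : ∀ x, StrictStochTrans (P x))
    (sstar : X → Equiv.Perm (Fin n)) (hsstarm : Measurable sstar)
    (hmed : ∀ x, IsMedian (P x) (sstar x))
    (s : X → Equiv.Perm (Fin n)) (hs : Measurable s) :
    jointE μ P (fun x τ => (Zfun s sstar x τ)^2) - (jointE μ P (Zfun s sstar))^2 ≤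
      ((n : ℝ) * (n - 1) / (2 * H)) * (Risk μ P s - Risk μ P sstar) := by
  set N : ℝ := ((pairs n).card : ℝ) with hN
  have hN0 : 0 ≤ N := Nat.cast_nonneg _
  -- measurability of the relevant functions of x
  have hLs : Measurable fun x => L (P x) (s x) := by
    have : (fun x => L (P x) (s x))
        = fun x => ∑ τ : Equiv.Perm (Fin n), P x τ * dtau τ (s x) := rfl
    rw [this]
    exact Finset.measurable_sum _ fun τ _ => (hmeas τ).mul (meas_comp hs (dtau τ))
  have hLstar : Measurable fun x => L (P x) (sstar x) := by
    have : (fun x => L (P x) (sstar x))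
        = fun x => ∑ τ : Equiv.Perm (Fin n), P x τ * dtau τ (sstar x) := rfl
    rw [this]
    exact Finset.measurable_sum _ fun τ _ =>
      (hmeas τ).mul (meas_comp hsstarm (dtau τ))
  have hZτ : ∀ τ, Measurable fun x => Zfun s sstar x τ := by
    intro τ
    unfold Zfun
    apply Finset.measurable_sum
    intro p _
    exact (meas_comp hs fun σ =>
        (if (((τ p.1 : ℕ) : ℤ) - ((τ p.2 : ℕ) : ℤ)) *
            (((σ p.1 : ℕ) : ℤ) - ((σ p.2 : ℕ) : ℤ)) < 0 then (1:ℝ) else 0)).sub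
      (meas_comp hsstarm fun σ =>
        (if (((τ p.1 : ℕ) : ℤ) - ((τ p.2 : ℕ) : ℤ)) *
            (((σ p.1 : ℕ) : ℤ) - ((σ p.2 : ℕ) : ℤ)) < 0 then (1:ℝ) else 0))
  have hg : Measurable fun x => ∑ τ : Equiv.Perm (Fin n),
      P x τ * (Zfun s sstar x τ)^2 :=
    Finset.measurable_sum _ fun τ _ => (hmeas τ).mul ((hZτ τ).pow_const 2)
  -- bounds
  have hZbd : ∀ x τ, |Zfun s sstar x τ| ≤ N := by
    intro x τ
    refine (Zfun_abs_le s sstar x τ).trans ?_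
    rw [hN]
    exact_mod_cast Finset.card_filter_le (pairs n) _
  have hgbd : ∀ x, |∑ τ : Equiv.Perm (Fin n), P x τ * (Zfun s sstar x τ)^2| ≤ N^2 := by
    intro x
    rw [abs_of_nonneg (Finset.sum_nonneg fun τ _ =>
      mul_nonneg ((hP x).1 τ) (sq_nonneg _))]
    calc ∑ τ : Equiv.Perm (Fin n), P x τ * (Zfun s sstar x τ)^2
        ≤ ∑ τ : Equiv.Perm (Fin n), P x τ * N^2 := by
          apply Finset.sum_le_sum
          intro τ _
          apply mul_le_mul_of_nonneg_left _ ((hP x).1 τ)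
          calc (Zfun s sstar x τ)^2 = |Zfun s sstar x τ|^2 := (sq_abs _).symm
            _ ≤ N^2 := by nlinarith [hZbd x τ, abs_nonneg (Zfun s sstar x τ)]
      _ = N^2 := by rw [← Finset.sum_mul, (hP x).2, one_mul]
  -- integrability
  have intLs : Integrable (fun x => L (P x) (s x)) μ := by
    refine Integrable.mono' (integrable_const N) hLs.aestronglyMeasurable ?_
    filter_upwards with x
    rw [Real.norm_eq_abs, abs_of_nonneg (L_nonneg (hP x) (s x))]
    exact L_le (hP x) (s x)
  have intLstar : Integrable (fun x => L (P x) (sstar x)) μ := by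
    refine Integrable.mono' (integrable_const N) hLstar.aestronglyMeasurable ?_
    filter_upwards with x
    rw [Real.norm_eq_abs, abs_of_nonneg (L_nonneg (hP x) (sstar x))]
    exact L_le (hP x) (sstar x)
  have intg : Integrable (fun x => ∑ τ : Equiv.Perm (Fin n),
      P x τ * (Zfun s sstar x τ)^2) μ := by
    refine Integrable.mono' (integrable_const (N^2)) hg.aestronglyMeasurable ?_
    filter_upwards with x
    rw [Real.norm_eq_abs]
    exact hgbd x
  have intf : Integrable (fun x =>
      (N / (2 * H)) * (L (P x) (s x) - L (P x) (sstar x))) μ :=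
    ((intLs.sub intLstar).const_mul _)
  -- main integral inequality
  have key : jointE μ P (fun x τ => (Zfun s sstar x τ)^2) ≤
      (N / (2 * H)) * (Risk μ P s - Risk μ P sstar) := by
    have h1 : jointE μ P (fun x τ => (Zfun s sstar x τ)^2)
        = ∫ x, (∑ τ : Equiv.Perm (Fin n), P x τ * (Zfun s sstar x τ)^2) ∂μ := rfl
    rw [h1]
    calc ∫ x, (∑ τ : Equiv.Perm (Fin n), P x τ * (Zfun s sstar x τ)^2) ∂μ
        ≤ ∫ x, (N / (2 * H)) * (L (P x) (s x) - L (P x) (sstar x)) ∂μ := by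
          apply integral_mono intg intf
          intro x
          exact sum_sq_le (hP x) (hTx x) s sstar x (hmed x) hHpos (hH x)
      _ = (N / (2 * H)) * (Risk μ P s - Risk μ P sstar) := by
          rw [integral_const_mul, integral_sub intLs intLstar]
          rfl
  -- risk difference is nonnegative
  have hRnn : 0 ≤ Risk μ P s - Risk μ P sstar := by
    rw [show Risk μ P s - Risk μ P sstar
      = ∫ x, (L (P x) (s x) - L (P x) (sstar x)) ∂μ by
        rw [integral_sub intLs intLstar]; rfl]
    apply integral_nonneg
    intro x
    have := hmed x (s x)
    simp only [Pi.zero_apply, sub_nonneg]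
    exact this
  -- comparing constants
  have hNle : N ≤ (n : ℝ) * (n - 1) := by
    have hsub : pairs n ⊆ (Finset.univ : Finset (Fin n)).offDiag := by
      intro p hp
      have : p.1 < p.2 := by simpa [pairs] using hp
      simp [Finset.mem_offDiag, ne_of_lt this]
    have hcard := Finset.card_le_card hsub
    rw [Finset.offDiag_card] at hcard
    simp only [Finset.card_univ, Fintype.card_fin] at hcard
    rw [hN]
    have hnn : n ≤ n * n := by nlinarith [sq_nonneg n]
    calc ((pairs n).card : ℝ) ≤ ((n * n - n : ℕ) : ℝ) := by exact_mod_cast hcard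
      _ = (n : ℝ) * n - n := by
          rw [Nat.cast_sub hnn]; push_cast; ring
      _ = (n : ℝ) * (n - 1) := by ring
  have hfinal : (N / (2 * H)) * (Risk μ P s - Risk μ P sstar) ≤
      ((n : ℝ) * (n - 1) / (2 * H)) * (Risk μ P s - Risk μ P sstar) := by
    exact mul_le_mul_of_nonneg_right
      (div_le_div_of_nonneg_right hNle (by positivity) |>.trans_eq rfl) hRnn
  calc jointE μ P (fun x τ => (Zfun s sstar x τ)^2) - (jointE μ P (Zfun s sstar))^2
      ≤ jointE μ P (fun x τ => (Zfun s sstar x τ)^2) := by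
        nlinarith [sq_nonneg (jointE μ P (Zfun s sstar))]
    _ ≤ (N / (2 * H)) * (Risk μ P s - Risk μ P sstar) := key
    _ ≤ _ := hfinal
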